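/- (Eckart–Young for higher-order ⋆M-product: optimality of truncation.) Let M₃,…,M_p be invertible with each M_k = c_k W_k, c_k ≠ 0 and W_k orthogonal, let A ∈ ℝ^{n₁×n₂×⋯×n_p} have t-SVDM A = U ⋆M S ⋆M Vᵀ, and let A_k be the t-rank-k truncation. Then for every tensor B ∈ ℝ^{n₁×n₂×⋯×n_p} of t-rank at most k (equivalently, every frontal slice of the transform-domain tensor B̂ has matrix rank at most k), ‖A − A_k‖_F ≤ ‖A − B‖_F. -/

import Mathlib

open Matrix

/-!
Order-`p` real tensors (`p = q + 2`) are represented as families of frontal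
slices: a tensor `A ∈ ℝ^{n₁ × n₂ × n₃ × ⋯ × n_p}` is a function
`A : TI m → Matrix (Fin n₁) (Fin n₂) ℝ`, where `TI m = ∀ k : Fin q, Fin (m k)`
is the trailing multi-index `(i₃, …, i_p)` and `A i` is the frontal slice
`A(:,:,i₃,…,i_p)`.
-/

namespace TSVDM

variable {q : ℕ} {m : Fin q → ℕ}

/-- Trailing multi-index `(i₃, …, i_p)`. -/
abbrev TI (m : Fin q → ℕ) : Type := ∀ k, Fin (m k)

/-- Transform-domain tensor `Â = A ×₃ M₃ ×₄ M₄ ⋯ ×_p M_p`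
(mode-`k` products along all trailing modes). -/
noncomputable def hat (M : ∀ k, Matrix (Fin (m k)) (Fin (m k)) ℝ) {a b : Type}
    (A : TI m → Matrix a b ℝ) : TI m → Matrix a b ℝ :=
  fun i => ∑ j : TI m, (∏ k, M k (i k) (j k)) • A j

/-- Inverse transform `×₃ M₃⁻¹ ×₄ M₄⁻¹ ⋯ ×_p M_p⁻¹`. -/
noncomputable def unhat (M : ∀ k, Matrix (Fin (m k)) (Fin (m k)) ℝ) {a b : Type}
    (A : TI m → Matrix a b ℝ) : TI m → Matrix a b ℝ :=
  fun i => ∑ j : TI m, (∏ k, (M k)⁻¹ (i k) (j k)) • A j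

/-- The `⋆M`-product: `A ⋆M B = (Â △ B̂) ×₃ M₃⁻¹ ⋯ ×_p M_p⁻¹`, where `△` is the
facewise product (slice-wise matrix multiplication). -/
noncomputable def starM (M : ∀ k, Matrix (Fin (m k)) (Fin (m k)) ℝ)
    {a b c : Type} [Fintype b]
    (A : TI m → Matrix a b ℝ) (B : TI m → Matrix b c ℝ) : TI m → Matrix a c ℝ :=
  unhat M (fun i => hat M A i * hat M B i)

/-- The `⋆M`-transpose: transpose every transform-domain frontal slice. -/
noncomputable def transM (M : ∀ k, Matrix (Fin (m k)) (Fin (m k)) ℝ) {a b : Type}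
    (A : TI m → Matrix a b ℝ) : TI m → Matrix b a ℝ :=
  unhat M (fun i => (hat M A i)ᵀ)

/-- The `⋆M`-identity: all transform-domain frontal slices equal the identity matrix. -/
noncomputable def idM (M : ∀ k, Matrix (Fin (m k)) (Fin (m k)) ℝ)
    (a : Type) [DecidableEq a] : TI m → Matrix a a ℝ :=
  unhat M (fun _ => (1 : Matrix a a ℝ))

/-- `Q` is `⋆M`-orthogonal if `Qᵀ ⋆M Q = Q ⋆M Qᵀ = I`. -/
def IsStarMOrthogonal (M : ∀ k, Matrix (Fin (m k)) (Fin (m k)) ℝ)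
    {a : Type} [Fintype a] [DecidableEq a] (Q : TI m → Matrix a a ℝ) : Prop :=
  starM M (transM M Q) Q = idM M a ∧ starM M Q (transM M Q) = idM M a

/-- Frobenius norm of a tensor. -/
noncomputable def frob {a b : Type} [Fintype a] [Fintype b]
    (A : TI m → Matrix a b ℝ) : ℝ :=
  Real.sqrt (∑ i : TI m, ∑ r : a, ∑ c : b, A i r c ^ 2)

/-- Diagonal position `(j, j)`: row index. -/
def dIdx₁ {n₁ n₂ : ℕ} (j : Fin (min n₁ n₂)) : Fin n₁ :=
  ⟨j.1, lt_of_lt_of_le j.2 (Nat.min_le_left n₁ n₂)⟩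

/-- Diagonal position `(j, j)`: column index. -/
def dIdx₂ {n₁ n₂ : ℕ} (j : Fin (min n₁ n₂)) : Fin n₂ :=
  ⟨j.1, lt_of_lt_of_le j.2 (Nat.min_le_right n₁ n₂)⟩

/-- `A = U ⋆M S ⋆M Vᵀ` is a t-SVDM of `A`: `U`, `V` are `⋆M`-orthogonal, `S` is
f-diagonal (each transform-domain frontal slice is diagonal), and the diagonal
entries of each frontal slice of `Ŝ` are nonnegative and in descending order. -/
structure IsTSVDM (M : ∀ k, Matrix (Fin (m k)) (Fin (m k)) ℝ) {n₁ n₂ : ℕ}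
    (A : TI m → Matrix (Fin n₁) (Fin n₂) ℝ)
    (U : TI m → Matrix (Fin n₁) (Fin n₁) ℝ)
    (S : TI m → Matrix (Fin n₁) (Fin n₂) ℝ)
    (V : TI m → Matrix (Fin n₂) (Fin n₂) ℝ) : Prop where
  decomp : A = starM M (starM M U S) (transM M V)
  orthU : IsStarMOrthogonal M U
  orthV : IsStarMOrthogonal M V
  fdiag : ∀ (i : TI m) (a : Fin n₁) (b : Fin n₂), (a : ℕ) ≠ (b : ℕ) → hat M S i a b = 0
  nonneg : ∀ (i : TI m) (j : Fin (min n₁ n₂)), 0 ≤ hat M S i (dIdx₁ j) (dIdx₂ j)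
  descend : ∀ (i : TI m) (j j' : Fin (min n₁ n₂)), j ≤ j' →
    hat M S i (dIdx₁ j') (dIdx₂ j') ≤ hat M S i (dIdx₁ j) (dIdx₂ j)

/-- The `(j,j)`-singular tube of `S`, as a function of the trailing multi-index. -/
def tube {n₁ n₂ : ℕ} (S : TI m → Matrix (Fin n₁) (Fin n₂) ℝ)
    (j : Fin (min n₁ n₂)) : TI m → ℝ :=
  fun i => S i (dIdx₁ j) (dIdx₂ j)

/-- Frobenius norm of the `(j,j)`-singular tube of `S`. -/
noncomputable def tubeNorm {n₁ n₂ : ℕ} (S : TI m → Matrix (Fin n₁) (Fin n₂) ℝ)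
    (j : Fin (min n₁ n₂)) : ℝ :=
  Real.sqrt (∑ i : TI m, tube S j i ^ 2)

/-- `r` is the t-rank: the number of nonzero singular tubes (tubes `s₁,…,s_r`
are nonzero and the remaining ones vanish). -/
def HasTRank {n₁ n₂ : ℕ} (S : TI m → Matrix (Fin n₁) (Fin n₂) ℝ) (r : ℕ) : Prop :=
  ∀ j : Fin (min n₁ n₂), ((j : ℕ) < r ↔ tube S j ≠ 0)

/-- Keep only the first `k` lateral slices (columns of each frontal slice). -/
def truncCols {n k : ℕ} (hk : k ≤ n) {a : Type}
    (U : TI m → Matrix a (Fin n) ℝ) : TI m → Matrix a (Fin k) ℝ :=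
  fun i => Matrix.of fun r c => U i r (Fin.castLE hk c)

/-- Keep only the leading `k × k` block of each frontal slice. -/
def truncBlock {n₁ n₂ k : ℕ} (h₁ : k ≤ n₁) (h₂ : k ≤ n₂)
    (S : TI m → Matrix (Fin n₁) (Fin n₂) ℝ) : TI m → Matrix (Fin k) (Fin k) ℝ :=
  fun i => Matrix.of fun a b => S i (Fin.castLE h₁ a) (Fin.castLE h₂ b)

/-- The t-rank-`k` truncation `A_k = U_k ⋆M S_k ⋆M V_kᵀ`. -/
noncomputable def truncApprox (M : ∀ k, Matrix (Fin (m k)) (Fin (m k)) ℝ)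
    {n₁ n₂ : ℕ} (U : TI m → Matrix (Fin n₁) (Fin n₁) ℝ)
    (S : TI m → Matrix (Fin n₁) (Fin n₂) ℝ)
    (V : TI m → Matrix (Fin n₂) (Fin n₂) ℝ) (k : ℕ) (hk : k ≤ min n₁ n₂) :
    TI m → Matrix (Fin n₁) (Fin n₂) ℝ :=
  starM M
    (starM M (truncCols (le_trans hk (Nat.min_le_left _ _)) U)
      (truncBlock (le_trans hk (Nat.min_le_left _ _)) (le_trans hk (Nat.min_le_right _ _)) S))
    (transM M (truncCols (le_trans hk (Nat.min_le_right _ _)) V))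

/-- The `j`-th lateral slice `A(:,j,:,…,:)`, as an `n₁ × 1 × n₃ × ⋯ × n_p` tensor. -/
def lateral {n₁ n₂ : ℕ} (A : TI m → Matrix (Fin n₁) (Fin n₂) ℝ) (j : Fin n₂) :
    TI m → Matrix (Fin n₁) (Fin 1) ℝ :=
  fun i => Matrix.of fun r _ => A i r j

/-- The `(j,j)`-singular tube of `S` regarded as a `1 × 1 × n₃ × ⋯ × n_p` tensor. -/
def tubeT {n₁ n₂ : ℕ} (S : TI m → Matrix (Fin n₁) (Fin n₂) ℝ)
    (j : Fin (min n₁ n₂)) : TI m → Matrix (Fin 1) (Fin 1) ℝ :=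
  fun i => Matrix.of fun _ _ => S i (dIdx₁ j) (dIdx₂ j)



noncomputable def msq {a b : Type} [Fintype a] [Fintype b] (X : Matrix a b ℝ) : ℝ :=
  ∑ r, ∑ c, X r c ^ 2

lemma msq_eq_trace {a b : Type} [Fintype a] [Fintype b] (X : Matrix a b ℝ) :
    msq X = (Xᵀ * X).trace := by
  unfold msq Matrix.trace
  rw [Finset.sum_comm]
  refine Finset.sum_congr rfl fun c _ => ?_
  simp [Matrix.mul_apply, Matrix.diag, Matrix.transpose_apply, pow_two]

lemma exists_proj {n₁ n₂ : ℕ} (k : ℕ) (C : Matrix (Fin n₁) (Fin n₂) ℝ) (hC : C.rank ≤ k) :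
    ∃ P : Matrix (Fin n₁) (Fin n₁) ℝ, Pᵀ = P ∧ P * P = P ∧ P.trace ≤ (k : ℝ) ∧ P * C = C := by
  classical
  set e : EuclideanSpace ℝ (Fin n₁) ≃ₗ[ℝ] (Fin n₁ → ℝ) :=
    WithLp.linearEquiv 2 ℝ (Fin n₁ → ℝ) with he
  set W : Submodule ℝ (EuclideanSpace ℝ (Fin n₁)) :=
    (LinearMap.range C.mulVecLin).map (e.symm : (Fin n₁ → ℝ) →ₗ[ℝ] _) with hW
  have hfr : Module.finrank ℝ W = C.rank := LinearEquiv.finrank_map_eq e.symm _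
  set r := Module.finrank ℝ W with hr
  have hrk : r ≤ k := hfr.trans_le hC
  have hrr : Module.finrank ℝ ↥W = r := hr.symm
  let b : OrthonormalBasis (Fin r) ℝ W := (stdOrthonormalBasis ℝ W).reindex (finCongr hrr)
  let qv : Fin r → (Fin n₁ → ℝ) := fun i => e ((b i : EuclideanSpace ℝ (Fin n₁)))
  have happ : ∀ (x : EuclideanSpace ℝ (Fin n₁)) (a : Fin n₁), e x a = x a := fun x a => by
    simp [he, WithLp.linearEquiv_apply]
  have hinner : ∀ x y : EuclideanSpace ℝ (Fin n₁), (inner ℝ x y : ℝ) = (e x) ⬝ᵥ (e y) := by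
    intro x y
    simp only [PiLp.inner_apply, RCLike.inner_apply, conj_trivial, dotProduct, happ]
    exact Finset.sum_congr rfl fun _ _ => mul_comm _ _
  have horth : ∀ i j, qv i ⬝ᵥ qv j = if i = j then 1 else 0 := by
    intro i j
    have h2 := (orthonormal_iff_ite.mp b.orthonormal) i j
    rw [Submodule.coe_inner, hinner] at h2
    exact_mod_cast h2
  refine ⟨∑ i, vecMulVec (qv i) (qv i), ?_, ?_, ?_, ?_⟩
  · ext a c
    simp [Matrix.transpose_apply, Matrix.sum_apply, vecMulVec_apply, mul_comm]
  · rw [Finset.sum_mul_sum]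
    have hvv : ∀ i j, vecMulVec (qv i) (qv i) * vecMulVec (qv j) (qv j)
        = if i = j then vecMulVec (qv i) (qv j) else 0 := by
      intro i j
      have hd : ∀ a c, ∑ t, (qv i a * qv i t) * (qv j t * qv j c)
          = (qv i a * qv j c) * (qv i ⬝ᵥ qv j) := by
        intro a c
        rw [dotProduct, Finset.mul_sum]
        exact Finset.sum_congr rfl fun t _ => by ring
      ext a c
      rw [Matrix.mul_apply]
      simp only [vecMulVec_apply]
      rw [hd a c, horth i j]
      by_cases h : i = j <;> simp [h, vecMulVec_apply]
    calc (∑ i, ∑ j, vecMulVec (qv i) (qv i) * vecMulVec (qv j) (qv j))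
        = ∑ i, ∑ j, (if i = j then vecMulVec (qv i) (qv j) else 0) := by
          exact Finset.sum_congr rfl fun i _ => Finset.sum_congr rfl fun j _ => hvv i j
      _ = ∑ i, vecMulVec (qv i) (qv i) := by
          refine Finset.sum_congr rfl fun i _ => ?_
          rw [Finset.sum_ite_eq]
          simp
  · rw [Matrix.trace_sum]
    have h1 : ∀ i : Fin r, (vecMulVec (qv i) (qv i)).trace = 1 := by
      intro i
      have h2 := horth i i
      simp only [if_pos rfl, dotProduct] at h2
      simpa [Matrix.trace, Matrix.diag, vecMulVec_apply] using h2
    rw [Finset.sum_congr rfl fun i _ => h1 i]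
    simp only [Finset.sum_const, Finset.card_univ, Fintype.card_fin, nsmul_eq_mul, mul_one]
    exact_mod_cast hrk
  · have hmem : ∀ c : Fin n₂, (fun rr => C rr c) ∈ LinearMap.range C.mulVecLin := by
      intro c
      refine ⟨Pi.single c 1, ?_⟩
      simp [Matrix.mulVecLin, Matrix.mulVec_single]
      rfl
    have hfix : ∀ v ∈ LinearMap.range C.mulVecLin,
        (∑ i, vecMulVec (qv i) (qv i)) *ᵥ v = v := by
      intro v hv
      have hmem' : e.symm v ∈ W := Submodule.mem_map_of_mem hv
      set x : W := ⟨e.symm v, hmem'⟩ with hx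
      have hrepr : ∀ i, b.repr x i = qv i ⬝ᵥ v := by
        intro i
        rw [b.repr_apply_apply, Submodule.coe_inner, hinner]
        have : e ((x : EuclideanSpace ℝ (Fin n₁))) = v := by
          rw [hx]; simp
        rw [this]
      have hsum := b.sum_repr x
      have hcoe : ((∑ i, b.repr x i • b i : W) : EuclideanSpace ℝ (Fin n₁)) = e.symm v := by
        rw [hsum]
      have hv2 : ∀ a, v a = ∑ i, (qv i ⬝ᵥ v) * qv i a := by
        intro a
        have h3 : e ((∑ i, b.repr x i • b i : W) : EuclideanSpace ℝ (Fin n₁)) = v := by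
          rw [hcoe]; simp
        rw [Submodule.coe_sum] at h3
        simp only [Submodule.coe_smul] at h3
        rw [map_sum] at h3
        have h4 := congrFun h3 a
        rw [Finset.sum_apply] at h4
        rw [← h4]
        refine Finset.sum_congr rfl fun i _ => ?_
        rw [_root_.map_smul, ← hrepr i]
        simp [qv]
      ext a
      rw [Matrix.mulVec, dotProduct]
      simp only [Matrix.sum_apply, vecMulVec_apply]
      calc ∑ t, (∑ i, (qv i a * qv i t)) * v t
          = ∑ t, ∑ i, qv i a * (qv i t * v t) := by
            refine Finset.sum_congr rfl fun t _ => ?_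
            rw [Finset.sum_mul]
            exact Finset.sum_congr rfl fun i _ => by ring
        _ = ∑ i, (qv i ⬝ᵥ v) * qv i a := by
            rw [Finset.sum_comm]
            refine Finset.sum_congr rfl fun i _ => ?_
            rw [dotProduct, Finset.sum_mul]
            exact Finset.sum_congr rfl fun t _ => by ring
        _ = v a := (hv2 a).symm
    ext a c
    have h5 := congrFun (hfix _ (hmem c)) a
    rw [Matrix.mulVec, dotProduct] at h5
    rw [Matrix.mul_apply]
    exact h5



/-- Sum over `Fin n` of a function vanishing above `k` equals sum over `Fin k`. -/
lemma sum_castLE {n k : ℕ} (h : k ≤ n) (g : Fin n → ℝ)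
    (hg : ∀ a : Fin n, k ≤ (a : ℕ) → g a = 0) :
    ∑ a : Fin n, g a = ∑ a : Fin k, g (Fin.castLE h a) := by
  classical
  have hG : ∀ {l : ℕ} (hl : l ≤ n) (gg : Fin n → ℝ),
      ∑ a : Fin l, gg (Fin.castLE hl a)
        = ∑ x ∈ Finset.range l, (if hx : x < n then gg ⟨x, hx⟩ else 0) := by
    intro l hl gg
    rw [← Fin.sum_univ_eq_sum_range (fun x => if hx : x < n then gg ⟨x, hx⟩ else 0) l]
    refine Finset.sum_congr rfl fun a _ => ?_
    rw [dif_pos (lt_of_lt_of_le a.2 hl)]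
    rfl
  have h1 : ∑ a : Fin n, g a = ∑ a : Fin n, g (Fin.castLE le_rfl a) := by
    refine Finset.sum_congr rfl fun a _ => ?_
    congr
  rw [h1, hG le_rfl g, hG h g]
  refine (Finset.sum_subset (Finset.range_subset_range.mpr h) ?_).symm
  intro x hx hxk
  rw [Finset.mem_range] at hx
  rw [Finset.mem_range, not_lt] at hxk
  rw [dif_pos hx]
  exact hg ⟨x, hx⟩ hxk

/-- Sum of entries of a function supported on the diagonal. -/
lemma diag_sum {n₁ n₂ : ℕ} (f : Fin n₁ → Fin n₂ → ℝ)
    (hf : ∀ (a : Fin n₁) (b : Fin n₂), (a : ℕ) ≠ (b : ℕ) → f a b = 0) :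
    ∑ a, ∑ b, f a b = ∑ j : Fin (min n₁ n₂), f (dIdx₁ j) (dIdx₂ j) := by
  classical
  have hinner : ∀ a : Fin n₁,
      (∑ b, f a b) = if h : (a : ℕ) < n₂ then f a ⟨a, h⟩ else 0 := by
    intro a
    by_cases h : (a : ℕ) < n₂
    · rw [dif_pos h]
      refine Finset.sum_eq_single ⟨(a : ℕ), h⟩ (fun b _ hb => hf a b ?_) (fun hmem => absurd (Finset.mem_univ _) hmem)
      intro hab
      exact hb (Fin.ext hab.symm)
    · rw [dif_neg h]
      exact Finset.sum_eq_zero fun b _ => hf a b (by omega)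
  rw [Finset.sum_congr rfl fun a _ => hinner a]
  -- now reduce Fin n₁ sum to Fin (min n₁ n₂)
  have hm : min n₁ n₂ ≤ n₁ := Nat.min_le_left _ _
  rw [sum_castLE hm _ ?side]
  case side =>
    intro a ha
    have : ¬ (a : ℕ) < n₂ := by omega
    rw [dif_neg this]
  refine Finset.sum_congr rfl fun j _ => ?_
  have hj2 : ((Fin.castLE hm j : Fin n₁) : ℕ) < n₂ := lt_of_lt_of_le j.2 (Nat.min_le_right _ _)
  rw [dif_pos hj2]
  rfl

lemma trace_transpose_mul' {a b : Type} [Fintype a] [Fintype b] (X Y : Matrix a b ℝ) :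
    (Xᵀ * Y).trace = ∑ r, ∑ c, X r c * Y r c := by
  unfold Matrix.trace
  rw [Finset.sum_comm]
  refine Finset.sum_congr rfl fun c _ => ?_
  simp [Matrix.mul_apply, Matrix.diag, Matrix.transpose_apply]

lemma msq_add_of_cross {a b : Type} [Fintype a] [Fintype b] (X Y : Matrix a b ℝ)
    (h : (Xᵀ * Y).trace = 0) : msq (X + Y) = msq X + msq Y := by
  have h2 : (Yᵀ * X).trace = 0 := by
    rw [← Matrix.trace_transpose (Yᵀ * X), Matrix.transpose_mul, Matrix.transpose_transpose, h]
  rw [msq_eq_trace, msq_eq_trace, msq_eq_trace, Matrix.transpose_add, Matrix.add_mul,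
    Matrix.mul_add, Matrix.mul_add, Matrix.trace_add, Matrix.trace_add, Matrix.trace_add,
    h, h2]
  ring

lemma diag_EY {n₁ n₂ : ℕ} (k : ℕ) (hk : k ≤ min n₁ n₂)
    (S C : Matrix (Fin n₁) (Fin n₂) ℝ)
    (hdiag : ∀ (a : Fin n₁) (b : Fin n₂), (a:ℕ) ≠ (b:ℕ) → S a b = 0)
    (hnn : ∀ j : Fin (min n₁ n₂), 0 ≤ S (dIdx₁ j) (dIdx₂ j))
    (hdesc : ∀ j j' : Fin (min n₁ n₂), j ≤ j' → S (dIdx₁ j') (dIdx₂ j') ≤ S (dIdx₁ j) (dIdx₂ j))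
    (hC : C.rank ≤ k) :
    (∑ j : Fin (min n₁ n₂), if k ≤ (j:ℕ) then S (dIdx₁ j) (dIdx₂ j) ^ 2 else 0)
      ≤ msq (S - C) := by
  classical
  obtain ⟨P, hPt, hPP, htr, hPC⟩ := exists_proj k C hC
  have hPsym : ∀ a t, P t a = P a t := fun a t =>
    (congrFun (congrFun hPt t) a).symm
  have hPsq : ∀ a, P a a = ∑ t, (P a t) ^ 2 := by
    intro a
    conv_lhs => rw [← hPP]
    rw [Matrix.mul_apply]
    exact Finset.sum_congr rfl fun t _ => by rw [hPsym a t]; ring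
  have hPd0 : ∀ a, 0 ≤ P a a := fun a => by
    rw [hPsq a]; exact Finset.sum_nonneg fun t _ => sq_nonneg _
  have hPd1 : ∀ a, P a a ≤ 1 := by
    intro a
    have h1 : (P a a) ^ 2 ≤ P a a := by
      conv_rhs => rw [hPsq a]
      exact Finset.single_le_sum (fun t _ => sq_nonneg (P a t)) (Finset.mem_univ a)
    nlinarith [hPd0 a]
  -- Pythagoras 1 : msq (S - C) = msq ((1-P)*S) + msq (P*S - C)
  have hOneP : (1 - P)ᵀ = 1 - P := by rw [Matrix.transpose_sub, Matrix.transpose_one, hPt]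
  have hsplit1 : msq (S - C) = msq ((1 - P) * S) + msq (P * S - C) := by
    have hXY : (1 - P) * S + (P * S - C) = S - C := by
      rw [Matrix.sub_mul, Matrix.one_mul]
      abel
    have hcross : ((1 - P) * S)ᵀ * (P * S - C) = 0 := by
      rw [Matrix.transpose_mul, hOneP, Matrix.mul_assoc]
      have : (1 - P) * (P * S - C) = 0 := by
        rw [Matrix.sub_mul, Matrix.one_mul, Matrix.mul_sub, ← Matrix.mul_assoc, hPP, hPC]
        abel
      rw [this, Matrix.mul_zero]
    rw [← hXY]
    exact msq_add_of_cross _ _ (by rw [hcross, Matrix.trace_zero])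
  -- Pythagoras 2 : msq S = msq (P*S) + msq ((1-P)*S)
  have hsplit2 : msq S = msq (P * S) + msq ((1 - P) * S) := by
    have hXY : P * S + (1 - P) * S = S := by
      rw [Matrix.sub_mul, Matrix.one_mul]
      abel
    have hcross : (P * S)ᵀ * ((1 - P) * S) = 0 := by
      rw [Matrix.transpose_mul, hPt, Matrix.mul_assoc, ← Matrix.mul_assoc P (1 - P) S]
      have : P * (1 - P) = 0 := by
        rw [Matrix.mul_sub, Matrix.mul_one, hPP, sub_self]
      rw [this, Matrix.zero_mul, Matrix.mul_zero]
    conv_lhs => rw [← hXY]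
    exact msq_add_of_cross _ _ (by rw [hcross, Matrix.trace_zero])
  -- msq S
  have hmsqS : msq S = ∑ j : Fin (min n₁ n₂), S (dIdx₁ j) (dIdx₂ j) ^ 2 := by
    unfold msq
    exact diag_sum _ (fun a b hab => by rw [hdiag a b hab]; ring)
  -- msq (P*S)
  have hmsqPS : msq (P * S)
      = ∑ j : Fin (min n₁ n₂), S (dIdx₁ j) (dIdx₂ j) ^ 2 * P (dIdx₁ j) (dIdx₁ j) := by
    have h1 : (P * S)ᵀ * (P * S) = Sᵀ * (P * S) := by
      rw [Matrix.transpose_mul, Matrix.mul_assoc, ← Matrix.mul_assoc Pᵀ P S, hPt, hPP]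
    rw [msq_eq_trace, h1, trace_transpose_mul']
    have h2 : ∀ (a : Fin n₁) (b : Fin n₂), (a:ℕ) ≠ (b:ℕ) → S a b * (P * S) a b = 0 :=
      fun a b hab => by rw [hdiag a b hab]; ring
    rw [diag_sum _ h2]
    refine Finset.sum_congr rfl fun j _ => ?_
    have h3 : (P * S) (dIdx₁ j) (dIdx₂ j) = P (dIdx₁ j) (dIdx₁ j) * S (dIdx₁ j) (dIdx₂ j) := by
      rw [Matrix.mul_apply]
      refine Finset.sum_eq_single (dIdx₁ j) (fun t _ ht => ?_)
        (fun hmem => absurd (Finset.mem_univ _) hmem)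
      have : (t : ℕ) ≠ ((dIdx₂ j : Fin n₂) : ℕ) := by
        intro hc
        exact ht (Fin.ext hc)
      rw [hdiag t _ this]
      ring
    rw [h3]
    ring
  -- the threshold value s
  set σ : Fin (min n₁ n₂) → ℝ := fun j => S (dIdx₁ j) (dIdx₂ j) with hσ
  set t : Fin (min n₁ n₂) → ℝ := fun j => P (dIdx₁ j) (dIdx₁ j) with ht
  have ht0 : ∀ j, 0 ≤ t j := fun j => hPd0 _
  have ht1 : ∀ j, t j ≤ 1 := fun j => hPd1 _
  set s : ℝ := if h : k < min n₁ n₂ then S (dIdx₁ ⟨k, h⟩) (dIdx₂ ⟨k, h⟩) ^ 2 else 0 with hs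
  have hs0 : 0 ≤ s := by
    rw [hs]
    by_cases h : k < min n₁ n₂
    · rw [dif_pos h]; exact sq_nonneg _
    · rw [dif_neg h]
  have hsle : ∀ j : Fin (min n₁ n₂), (j : ℕ) < k → s ≤ σ j ^ 2 := by
    intro j hj
    rw [hs]
    by_cases h : k < min n₁ n₂
    · rw [dif_pos h]
      have hle : j ≤ (⟨k, h⟩ : Fin (min n₁ n₂)) := by
        rw [Fin.le_def]; exact le_of_lt hj
      have h1 := hdesc j ⟨k, h⟩ hle
      have h2 := hnn (⟨k, h⟩ : Fin (min n₁ n₂))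
      nlinarith
    · rw [dif_neg h]; exact sq_nonneg _
  have hsge : ∀ j : Fin (min n₁ n₂), k ≤ (j : ℕ) → σ j ^ 2 ≤ s := by
    intro j hj
    have h : k < min n₁ n₂ := lt_of_le_of_lt hj j.2
    rw [hs, dif_pos h]
    have hle : (⟨k, h⟩ : Fin (min n₁ n₂)) ≤ j := by rw [Fin.le_def]; exact hj
    have h1 := hdesc ⟨k, h⟩ j hle
    have h2 := hnn j
    nlinarith
  -- sum of t over the diagonal is at most trace P ≤ k
  have hsumt : ∑ j, t j ≤ (k : ℝ) := by
    refine le_trans ?_ htr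
    unfold Matrix.trace
    have hinj : Function.Injective (dIdx₁ (n₁ := n₁) (n₂ := n₂)) := by
      intro x y hxy
      exact Fin.ext (congrArg (fun z : Fin n₁ => (z : ℕ)) hxy)
    calc ∑ j, t j = ∑ a ∈ Finset.univ.image (dIdx₁ (n₁ := n₁) (n₂ := n₂)), P a a := by
          rw [Finset.sum_image (fun x _ y _ h => hinj h)]
      _ ≤ ∑ a, P a a := Finset.sum_le_sum_of_subset_of_nonneg (Finset.subset_univ _)
          (fun a _ _ => hPd0 a)
      _ = Matrix.trace P := by unfold Matrix.trace Matrix.diag; rfl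
  -- count lemma
  have hcount : ∑ j : Fin (min n₁ n₂), (if (j : ℕ) < k then s else 0) = (k : ℝ) * s := by
    rw [Fin.sum_univ_eq_sum_range (fun x => if x < k then s else 0) (min n₁ n₂)]
    rw [← Finset.sum_subset (Finset.range_subset_range.mpr hk)
      (fun x _ hx => if_neg (by rwa [Finset.mem_range] at hx))]
    rw [Finset.sum_congr rfl fun x hx => if_pos (Finset.mem_range.mp hx)]
    rw [Finset.sum_const, Finset.card_range]
    simp [nsmul_eq_mul]
  -- main estimate
  have hmain : (∑ j : Fin (min n₁ n₂), if k ≤ (j:ℕ) then σ j ^ 2 else 0)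
      ≤ ∑ j, σ j ^ 2 * (1 - t j) := by
    have hterm : ∀ j : Fin (min n₁ n₂),
        (if (j : ℕ) < k then s else 0) - s * t j
          ≤ σ j ^ 2 * (1 - t j) - (if k ≤ (j:ℕ) then σ j ^ 2 else 0) := by
      intro j
      by_cases hj : (j : ℕ) < k
      · rw [if_pos hj, if_neg (by omega)]
        have h1 := hsle j hj
        have h2 := ht1 j
        have h3 := ht0 j
        nlinarith
      · rw [if_neg hj, if_pos (by omega)]
        have h1 := hsge j (by omega)
        have h2 := ht0 j
        have h3 := ht1 j
        nlinarith [sq_nonneg (σ j)]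
    have hsumlb : (0:ℝ) ≤ ∑ j, (σ j ^ 2 * (1 - t j) - (if k ≤ (j:ℕ) then σ j ^ 2 else 0)) := by
      refine le_trans ?_ (Finset.sum_le_sum fun j _ => hterm j)
      rw [Finset.sum_sub_distrib, hcount, ← Finset.mul_sum]
      nlinarith
    have := hsumlb
    rw [Finset.sum_sub_distrib] at this
    linarith
  -- put everything together
  have hge : msq ((1 - P) * S) = ∑ j, σ j ^ 2 * (1 - t j) := by
    have : msq ((1 - P) * S) = msq S - msq (P * S) := by linarith [hsplit2]
    rw [this, hmsqS, hmsqPS, ← Finset.sum_sub_distrib]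
    exact Finset.sum_congr rfl fun j _ => by ring
  have hfin : msq (P * S - C) ≥ 0 := by
    unfold msq
    exact Finset.sum_nonneg fun r _ => Finset.sum_nonneg fun c _ => sq_nonneg _
  calc (∑ j : Fin (min n₁ n₂), if k ≤ (j:ℕ) then S (dIdx₁ j) (dIdx₂ j) ^ 2 else 0)
      ≤ ∑ j, σ j ^ 2 * (1 - t j) := hmain
    _ = msq ((1 - P) * S) := hge.symm
    _ ≤ msq (S - C) := by linarith [hsplit1]

lemma msq_orth_left {a b : Type} [Fintype a] [Fintype b] [DecidableEq a]
    (Q : Matrix a a ℝ) (X : Matrix a b ℝ) (hQ : Qᵀ * Q = 1) : msq (Q * X) = msq X := by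
  rw [msq_eq_trace, msq_eq_trace, Matrix.transpose_mul, Matrix.mul_assoc,
    ← Matrix.mul_assoc Qᵀ Q X, hQ, Matrix.one_mul]

lemma msq_orth_right {a b : Type} [Fintype a] [Fintype b] [DecidableEq b]
    (X : Matrix a b ℝ) (V : Matrix b b ℝ) (hV : Vᵀ * V = 1) : msq (X * Vᵀ) = msq X := by
  rw [msq_eq_trace, msq_eq_trace]
  have h1 : (X * Vᵀ)ᵀ * (X * Vᵀ) = V * (Xᵀ * X) * Vᵀ := by
    rw [Matrix.transpose_mul, Matrix.transpose_transpose, Matrix.mul_assoc,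
      Matrix.mul_assoc, Matrix.mul_assoc]
  rw [h1, Matrix.trace_mul_cycle, ← Matrix.mul_assoc, hV, Matrix.one_mul]

def padk {n₁ n₂ : ℕ} (k : ℕ) (S : Matrix (Fin n₁) (Fin n₂) ℝ) : Matrix (Fin n₁) (Fin n₂) ℝ :=
  Matrix.of fun a b => if (a : ℕ) < k ∧ (b : ℕ) < k then S a b else 0

lemma padk_apply {n₁ n₂ : ℕ} (k : ℕ) (S : Matrix (Fin n₁) (Fin n₂) ℝ) (a : Fin n₁) (b : Fin n₂) :
    padk k S a b = if (a : ℕ) < k ∧ (b : ℕ) < k then S a b else 0 := rfl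

lemma trunc_mul_eq_pad {n₁ n₂ k : ℕ} (h₁ : k ≤ n₁) (h₂ : k ≤ n₂)
    (U : Matrix (Fin n₁) (Fin n₁) ℝ) (S : Matrix (Fin n₁) (Fin n₂) ℝ)
    (V : Matrix (Fin n₂) (Fin n₂) ℝ) :
    (Matrix.of fun (r : Fin n₁) (c : Fin k) => U r (Fin.castLE h₁ c))
      * (Matrix.of fun (a b : Fin k) => S (Fin.castLE h₁ a) (Fin.castLE h₂ b))
      * (Matrix.of fun (r : Fin n₂) (c : Fin k) => V r (Fin.castLE h₂ c))ᵀ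
      = U * padk k S * Vᵀ := by
  classical
  ext r c
  have hLHS : ((Matrix.of fun (r : Fin n₁) (c : Fin k) => U r (Fin.castLE h₁ c))
      * (Matrix.of fun (a b : Fin k) => S (Fin.castLE h₁ a) (Fin.castLE h₂ b))
      * (Matrix.of fun (r : Fin n₂) (c : Fin k) => V r (Fin.castLE h₂ c))ᵀ) r c
      = ∑ a : Fin k, ∑ b : Fin k,
          U r (Fin.castLE h₁ a) * S (Fin.castLE h₁ a) (Fin.castLE h₂ b)
            * V c (Fin.castLE h₂ b) := by
    rw [Matrix.mul_apply]
    rw [Finset.sum_congr rfl fun b _ => by rw [Matrix.mul_apply, Finset.sum_mul]]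
    rw [Finset.sum_comm]
    rfl
  have hRHS : (U * padk k S * Vᵀ) r c
      = ∑ a : Fin n₁, ∑ b : Fin n₂, U r a * padk k S a b * V c b := by
    rw [Matrix.mul_apply]
    rw [Finset.sum_congr rfl fun b _ => by rw [Matrix.mul_apply, Finset.sum_mul]]
    rw [Finset.sum_comm]
    rfl
  rw [hLHS, hRHS]
  rw [sum_castLE h₁ (fun a => ∑ b, U r a * padk k S a b * V c b) ?ha]
  case ha =>
    intro a hka
    refine Finset.sum_eq_zero fun b _ => ?_
    rw [padk_apply, if_neg (by omega)]
    ring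
  refine Finset.sum_congr rfl fun a _ => ?_
  rw [sum_castLE h₂ (fun b => U r (Fin.castLE h₁ a) * padk k S (Fin.castLE h₁ a) b * V c b) ?hb]
  case hb =>
    intro b hkb
    show U r (Fin.castLE h₁ a) * padk k S (Fin.castLE h₁ a) b * V c b = 0
    rw [padk_apply, if_neg (by omega)]
    ring
  refine Finset.sum_congr rfl fun b _ => ?_
  rw [padk_apply, if_pos ⟨by simpa using a.2, by simpa using b.2⟩]

lemma msq_sub_padk {n₁ n₂ : ℕ} (k : ℕ)
    (S : Matrix (Fin n₁) (Fin n₂) ℝ)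
    (hdiag : ∀ (a : Fin n₁) (b : Fin n₂), (a:ℕ) ≠ (b:ℕ) → S a b = 0) :
    msq (S - padk k S)
      = ∑ j : Fin (min n₁ n₂), if k ≤ (j:ℕ) then S (dIdx₁ j) (dIdx₂ j) ^ 2 else 0 := by
  unfold msq
  have h0 : ∀ (a : Fin n₁) (b : Fin n₂), (a:ℕ) ≠ (b:ℕ) → (S - padk k S) a b ^ 2 = 0 := by
    intro a b hab
    have h1 : padk k S a b = 0 := by
      rw [padk_apply]
      by_cases h : (a:ℕ) < k ∧ (b:ℕ) < k
      · rw [if_pos h]; exact hdiag a b hab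
      · rw [if_neg h]
    rw [Matrix.sub_apply, hdiag a b hab, h1]
    ring
  rw [diag_sum _ h0]
  refine Finset.sum_congr rfl fun j _ => ?_
  rw [Matrix.sub_apply, padk_apply]
  by_cases h : (j : ℕ) < k
  · rw [if_pos (⟨h, h⟩ : ((dIdx₁ j : Fin n₁) : ℕ) < k ∧ ((dIdx₂ j : Fin n₂) : ℕ) < k),
      if_neg (by omega : ¬ k ≤ (j : ℕ))]
    ring
  · have h1 : ¬ (((dIdx₁ j : Fin n₁) : ℕ) < k ∧ ((dIdx₂ j : Fin n₂) : ℕ) < k) :=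
      fun hc => h hc.1
    rw [if_neg h1, if_pos (by omega : k ≤ (j : ℕ))]
    ring

lemma matrixEY {n₁ n₂ : ℕ} (k : ℕ) (hk : k ≤ min n₁ n₂)
    (Uh : Matrix (Fin n₁) (Fin n₁) ℝ) (Sh : Matrix (Fin n₁) (Fin n₂) ℝ)
    (Vh : Matrix (Fin n₂) (Fin n₂) ℝ) (Bh : Matrix (Fin n₁) (Fin n₂) ℝ)
    (hU1 : Uhᵀ * Uh = 1) (hV1 : Vhᵀ * Vh = 1)
    (hU2 : Uh * Uhᵀ = 1) (hV2 : Vh * Vhᵀ = 1)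
    (hdiag : ∀ (a : Fin n₁) (b : Fin n₂), (a:ℕ) ≠ (b:ℕ) → Sh a b = 0)
    (hnn : ∀ j : Fin (min n₁ n₂), 0 ≤ Sh (dIdx₁ j) (dIdx₂ j))
    (hdesc : ∀ j j' : Fin (min n₁ n₂), j ≤ j' →
      Sh (dIdx₁ j') (dIdx₂ j') ≤ Sh (dIdx₁ j) (dIdx₂ j))
    (hB : Bh.rank ≤ k) :
    msq (Uh * Sh * Vhᵀ - Uh * padk k Sh * Vhᵀ) ≤ msq (Uh * Sh * Vhᵀ - Bh) := by
  have hL : msq (Uh * Sh * Vhᵀ - Uh * padk k Sh * Vhᵀ) = msq (Sh - padk k Sh) := by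
    rw [← Matrix.sub_mul, ← Matrix.mul_sub, msq_orth_right _ _ hV1, msq_orth_left _ _ hU1]
  have hBC : Uh * (Uhᵀ * Bh * Vh) * Vhᵀ = Bh := by
    simp only [← Matrix.mul_assoc]
    rw [hU2, Matrix.one_mul, Matrix.mul_assoc, hV2, Matrix.mul_one]
  have hR : msq (Uh * Sh * Vhᵀ - Bh) = msq (Sh - Uhᵀ * Bh * Vh) := by
    conv_lhs => rw [← hBC]
    rw [← Matrix.sub_mul, ← Matrix.mul_sub, msq_orth_right _ _ hV1, msq_orth_left _ _ hU1]
  have hCr : (Uhᵀ * Bh * Vh).rank ≤ k :=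
    le_trans (le_trans (Matrix.rank_mul_le_left _ _) (Matrix.rank_mul_le_right _ _)) hB
  rw [hL, hR, msq_sub_padk k Sh hdiag]
  exact diag_EY k hk Sh _ hdiag hnn hdesc hCr


/-! ### Tensor-level auxiliary lemmas -/

section TensorAux

variable {q : ℕ} {m : Fin q → ℕ}

lemma hat_entry (M : ∀ k, Matrix (Fin (m k)) (Fin (m k)) ℝ) {a b : Type}
    (A : TI m → Matrix a b ℝ) (i : TI m) (r : a) (c : b) :
    hat M A i r c = ∑ j : TI m, (∏ k, M k (i k) (j k)) * A j r c := by
  unfold hat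
  rw [Matrix.sum_apply]
  rfl

lemma hat_comp {a b : Type} (M N : ∀ k, Matrix (Fin (m k)) (Fin (m k)) ℝ)
    (h : ∀ k, N k * M k = 1) (A : TI m → Matrix a b ℝ) :
    hat N (hat M A) = A := by
  classical
  funext i
  ext r c
  rw [hat_entry]
  have hstep : ∀ j : TI m, (∏ k, N k (i k) (j k)) * (hat M A) j r c
      = ∑ l : TI m, (∏ k, N k (i k) (j k) * M k (j k) (l k)) * A l r c := by
    intro j
    rw [hat_entry, Finset.mul_sum]
    refine Finset.sum_congr rfl fun l _ => ?_
    rw [← mul_assoc, ← Finset.prod_mul_distrib]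
  rw [Finset.sum_congr rfl fun j _ => hstep j, Finset.sum_comm]
  have hcol : ∀ l : TI m,
      (∑ j : TI m, (∏ k, N k (i k) (j k) * M k (j k) (l k)) * A l r c)
        = (if i = l then 1 else 0) * A l r c := by
    intro l
    rw [← Finset.sum_mul]
    congr 1
    have h1 : ∏ k, (∑ t : Fin (m k), N k (i k) t * M k t (l k))
        = ∑ j : TI m, ∏ k, N k (i k) (j k) * M k (j k) (l k) := by
      rw [Finset.prod_univ_sum]
      rw [Fintype.piFinset_univ]
    rw [← h1]
    have h2 : ∀ k, (∑ t : Fin (m k), N k (i k) t * M k t (l k)) = (N k * M k) (i k) (l k) :=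
      fun k => (Matrix.mul_apply).symm
    rw [Finset.prod_congr rfl fun k _ => h2 k]
    rw [Finset.prod_congr rfl fun k _ => by rw [h k]]
    by_cases hil : i = l
    · rw [if_pos hil, hil]
      exact Finset.prod_eq_one fun k _ => Matrix.one_apply_eq _
    · rw [if_neg hil]
      obtain ⟨k0, hk0⟩ : ∃ k0, i k0 ≠ l k0 := by
        by_contra hcon
        push_neg at hcon
        exact hil (funext hcon)
      exact Finset.prod_eq_zero (Finset.mem_univ k0) (Matrix.one_apply_ne hk0)
  rw [Finset.sum_congr rfl fun l _ => hcol l]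
  simp [Finset.sum_ite_eq]

lemma unhat_eq_hat (M : ∀ k, Matrix (Fin (m k)) (Fin (m k)) ℝ) {a b : Type}
    (A : TI m → Matrix a b ℝ) : unhat M A = hat (fun k => (M k)⁻¹) A := rfl

lemma hat_unhat {a b : Type} (M : ∀ k, Matrix (Fin (m k)) (Fin (m k)) ℝ)
    (h : ∀ k, M k * (M k)⁻¹ = 1) (A : TI m → Matrix a b ℝ) :
    hat M (unhat M A) = A := by
  rw [unhat_eq_hat]
  exact hat_comp (fun k => (M k)⁻¹) M h A

lemma hat_starM_apply {α β γ : Type} [Fintype β] (M : ∀ k, Matrix (Fin (m k)) (Fin (m k)) ℝ)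
    (h : ∀ k, M k * (M k)⁻¹ = 1) (A : TI m → Matrix α β ℝ) (B : TI m → Matrix β γ ℝ)
    (i : TI m) : hat M (starM M A B) i = hat M A i * hat M B i :=
  congrFun (hat_unhat M h _) i

lemma hat_transM_apply {α β : Type} (M : ∀ k, Matrix (Fin (m k)) (Fin (m k)) ℝ)
    (h : ∀ k, M k * (M k)⁻¹ = 1) (A : TI m → Matrix α β ℝ) (i : TI m) :
    hat M (transM M A) i = (hat M A i)ᵀ :=
  congrFun (hat_unhat M h _) i

lemma hat_idM_apply {α : Type} [DecidableEq α] (M : ∀ k, Matrix (Fin (m k)) (Fin (m k)) ℝ)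
    (h : ∀ k, M k * (M k)⁻¹ = 1) (i : TI m) :
    hat M (idM M α) i = (1 : Matrix α α ℝ) :=
  congrFun (hat_unhat M h _) i

lemma hat_sub {a b : Type} (M : ∀ k, Matrix (Fin (m k)) (Fin (m k)) ℝ)
    (A B : TI m → Matrix a b ℝ) (i : TI m) :
    hat M (A - B) i = hat M A i - hat M B i := by
  ext r c
  rw [Matrix.sub_apply, hat_entry, hat_entry, hat_entry, ← Finset.sum_sub_distrib]
  refine Finset.sum_congr rfl fun j _ => ?_
  have h1 : (A - B) j r c = A j r c - B j r c := rfl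
  rw [h1, mul_sub]

lemma hat_truncCols {n k' : ℕ} (hk' : k' ≤ n) {α : Type}
    (M : ∀ k, Matrix (Fin (m k)) (Fin (m k)) ℝ) (U : TI m → Matrix α (Fin n) ℝ) (i : TI m) :
    hat M (truncCols hk' U) i = Matrix.of fun r c' => hat M U i r (Fin.castLE hk' c') := by
  ext r c'
  show hat M (truncCols hk' U) i r c' = hat M U i r (Fin.castLE hk' c')
  rw [hat_entry, hat_entry]
  rfl

lemma hat_truncBlock {n₁ n₂ k' : ℕ} (h₁ : k' ≤ n₁) (h₂ : k' ≤ n₂)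
    (M : ∀ k, Matrix (Fin (m k)) (Fin (m k)) ℝ)
    (S : TI m → Matrix (Fin n₁) (Fin n₂) ℝ) (i : TI m) :
    hat M (truncBlock h₁ h₂ S) i
      = Matrix.of fun a b => hat M S i (Fin.castLE h₁ a) (Fin.castLE h₂ b) := by
  ext a b
  show hat M (truncBlock h₁ h₂ S) i a b = hat M S i (Fin.castLE h₁ a) (Fin.castLE h₂ b)
  rw [hat_entry, hat_entry]
  rfl

lemma sum_sq_hatv (M : ∀ k, Matrix (Fin (m k)) (Fin (m k)) ℝ) (c : Fin q → ℝ)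
    (W : ∀ k, Matrix (Fin (m k)) (Fin (m k)) ℝ)
    (hW : ∀ k, W k * (W k)ᵀ = 1 ∧ (W k)ᵀ * W k = 1)
    (hM : ∀ k, M k = c k • W k) (v : TI m → ℝ) :
    ∑ i : TI m, (∑ j : TI m, (∏ k, M k (i k) (j k)) * v j) ^ 2
      = (∏ k, (c k) ^ 2) * ∑ j : TI m, v j ^ 2 := by
  classical
  have hMtM : ∀ (k : Fin q) (x y : Fin (m k)), (∑ t, M k t x * M k t y)
      = (c k) ^ 2 * (if x = y then 1 else 0) := by
    intro k x y
    have h1 : (∑ t, M k t x * M k t y) = ((M k)ᵀ * M k) x y := by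
      rw [Matrix.mul_apply]
      exact Finset.sum_congr rfl fun t _ => rfl
    rw [h1, hM k, Matrix.transpose_smul, Matrix.smul_mul, Matrix.mul_smul, smul_smul,
      (hW k).2, Matrix.smul_apply, Matrix.one_apply, smul_eq_mul, ← sq]
  have hexp : ∀ i : TI m, (∑ j : TI m, (∏ k, M k (i k) (j k)) * v j) ^ 2
      = ∑ j : TI m, ∑ l : TI m,
          ((∏ k, M k (i k) (j k)) * v j) * ((∏ k, M k (i k) (l k)) * v l) := by
    intro i
    rw [sq, Finset.sum_mul_sum]
  rw [Finset.sum_congr rfl fun i _ => hexp i, Finset.sum_comm]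
  rw [Finset.sum_congr rfl fun j _ => Finset.sum_comm]
  have hinner : ∀ j l : TI m,
      (∑ i : TI m, ((∏ k, M k (i k) (j k)) * v j) * ((∏ k, M k (i k) (l k)) * v l))
        = ((∏ k, (c k) ^ 2) * (if j = l then 1 else 0)) * (v j * v l) := by
    intro j l
    have h2 : ∀ i : TI m, ((∏ k, M k (i k) (j k)) * v j) * ((∏ k, M k (i k) (l k)) * v l)
        = (∏ k, M k (i k) (j k) * M k (i k) (l k)) * (v j * v l) := by
      intro i
      rw [Finset.prod_mul_distrib]
      ring
    rw [Finset.sum_congr rfl fun i _ => h2 i, ← Finset.sum_mul]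
    congr 1
    have h3 : ∑ i : TI m, ∏ k, M k (i k) (j k) * M k (i k) (l k)
        = ∏ k, ∑ t, M k t (j k) * M k t (l k) := by
      rw [Finset.prod_univ_sum, Fintype.piFinset_univ]
    rw [h3, Finset.prod_congr rfl fun k _ => hMtM k (j k) (l k), Finset.prod_mul_distrib]
    congr 1
    rw [Finset.prod_boole]
    by_cases hjl : j = l
    · rw [if_pos hjl, if_pos fun k _ => by rw [hjl]]
    · rw [if_neg hjl, if_neg]
      intro hcon
      exact hjl (funext fun k => hcon k (Finset.mem_univ k))
  rw [Finset.sum_congr rfl fun j _ => Finset.sum_congr rfl fun l _ => hinner j l]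
  rw [Finset.mul_sum]
  refine Finset.sum_congr rfl fun j _ => ?_
  rw [Finset.sum_eq_single j (fun l _ hl => by rw [if_neg fun hc => hl hc.symm]; ring)
    (fun hmem => absurd (Finset.mem_univ _) hmem)]
  rw [if_pos rfl]
  ring

lemma sum_msq_hat (M : ∀ k, Matrix (Fin (m k)) (Fin (m k)) ℝ) (c : Fin q → ℝ)
    (W : ∀ k, Matrix (Fin (m k)) (Fin (m k)) ℝ)
    (hW : ∀ k, W k * (W k)ᵀ = 1 ∧ (W k)ᵀ * W k = 1)
    (hM : ∀ k, M k = c k • W k) {a b : Type} [Fintype a] [Fintype b]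
    (X : TI m → Matrix a b ℝ) :
    ∑ i : TI m, msq (hat M X i) = (∏ k, (c k) ^ 2) * ∑ i : TI m, msq (X i) := by
  unfold msq
  rw [Finset.sum_comm]
  rw [Finset.sum_congr rfl fun r _ => Finset.sum_comm (f := fun i c' => hat M X i r c' ^ 2)]
  have hpt : ∀ (r : a) (c' : b), (∑ i : TI m, hat M X i r c' ^ 2)
      = (∏ k, (c k) ^ 2) * ∑ j : TI m, X j r c' ^ 2 := by
    intro r c'
    rw [Finset.sum_congr rfl fun i _ => by rw [hat_entry M X i r c']]
    exact sum_sq_hatv M c W hW hM (fun j => X j r c')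
  rw [Finset.sum_congr rfl fun r _ => Finset.sum_congr rfl fun c' _ => hpt r c']
  rw [Finset.sum_congr rfl fun r _ => (Finset.mul_sum Finset.univ (fun c' => ∑ j : TI m, X j r c' ^ 2) _).symm,
    ← Finset.mul_sum]
  congr 1
  calc ∑ r : a, ∑ c' : b, ∑ j : TI m, X j r c' ^ 2
      = ∑ r : a, ∑ j : TI m, ∑ c' : b, X j r c' ^ 2 :=
        Finset.sum_congr rfl fun r _ => Finset.sum_comm
    _ = ∑ j : TI m, ∑ r : a, ∑ c' : b, X j r c' ^ 2 := Finset.sum_comm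

end TensorAux


/-- (Eckart–Young for the higher-order `⋆M`-product: optimality.)
For every tensor `B` of t-rank at most `k` (every frontal slice of `B̂` has
matrix rank at most `k`), `‖A − A_k‖_F ≤ ‖A − B‖_F`. -/
theorem truncApprox_optimal {q : ℕ} {m : Fin q → ℕ}
    (M : ∀ k, Matrix (Fin (m k)) (Fin (m k)) ℝ)
    (c : Fin q → ℝ) (W : ∀ k, Matrix (Fin (m k)) (Fin (m k)) ℝ)
    (hc : ∀ k, c k ≠ 0)
    (hW : ∀ k, W k * (W k)ᵀ = 1 ∧ (W k)ᵀ * W k = 1)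
    (hM : ∀ k, M k = c k • W k)
    {n₁ n₂ : ℕ} (A : TI m → Matrix (Fin n₁) (Fin n₂) ℝ)
    (U : TI m → Matrix (Fin n₁) (Fin n₁) ℝ)
    (S : TI m → Matrix (Fin n₁) (Fin n₂) ℝ)
    (V : TI m → Matrix (Fin n₂) (Fin n₂) ℝ)
    (hSVD : IsTSVDM M A U S V) (k : ℕ) (hk : k ≤ min n₁ n₂) :
    ∀ B : TI m → Matrix (Fin n₁) (Fin n₂) ℝ, (∀ i : TI m, (hat M B i).rank ≤ k) →
      frob (A - truncApprox M U S V k hk) ≤ frob (A - B) := by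
  intro B hB
  classical
  -- invertibility facts for M
  have hMinv : ∀ k', (M k')⁻¹ = (c k')⁻¹ • (W k')ᵀ := by
    intro k'
    refine Matrix.inv_eq_right_inv ?_
    rw [hM k', Matrix.smul_mul, Matrix.mul_smul, smul_smul, (hW k').1,
      mul_inv_cancel₀ (hc k'), one_smul]
  have h2 : ∀ k', M k' * (M k')⁻¹ = 1 := by
    intro k'
    rw [hMinv k', hM k', Matrix.smul_mul, Matrix.mul_smul, smul_smul, (hW k').1,
      mul_inv_cancel₀ (hc k'), one_smul]
  -- transform-domain orthogonality of U and V
  have hU1 : ∀ i, (hat M U i)ᵀ * hat M U i = 1 := by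
    intro i
    have e := congrFun (congrArg (hat M) hSVD.orthU.1) i
    rw [hat_starM_apply M h2, hat_transM_apply M h2, hat_idM_apply M h2] at e
    exact e
  have hU2 : ∀ i, hat M U i * (hat M U i)ᵀ = 1 := by
    intro i
    have e := congrFun (congrArg (hat M) hSVD.orthU.2) i
    rw [hat_starM_apply M h2, hat_transM_apply M h2, hat_idM_apply M h2] at e
    exact e
  have hV1 : ∀ i, (hat M V i)ᵀ * hat M V i = 1 := by
    intro i
    have e := congrFun (congrArg (hat M) hSVD.orthV.1) i
    rw [hat_starM_apply M h2, hat_transM_apply M h2, hat_idM_apply M h2] at e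
    exact e
  have hV2 : ∀ i, hat M V i * (hat M V i)ᵀ = 1 := by
    intro i
    have e := congrFun (congrArg (hat M) hSVD.orthV.2) i
    rw [hat_starM_apply M h2, hat_transM_apply M h2, hat_idM_apply M h2] at e
    exact e
  -- transform-domain slices of A and of the truncation
  have hA : ∀ i, hat M A i = hat M U i * hat M S i * (hat M V i)ᵀ := by
    intro i
    have e := congrFun (congrArg (hat M) hSVD.decomp) i
    rw [hat_starM_apply M h2, hat_starM_apply M h2, hat_transM_apply M h2] at e
    exact e
  have hAk : ∀ i, hat M (truncApprox M U S V k hk) i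
      = hat M U i * padk k (hat M S i) * (hat M V i)ᵀ := by
    intro i
    show hat M (starM M
      (starM M (truncCols (le_trans hk (Nat.min_le_left _ _)) U)
        (truncBlock (le_trans hk (Nat.min_le_left _ _)) (le_trans hk (Nat.min_le_right _ _)) S))
      (transM M (truncCols (le_trans hk (Nat.min_le_right _ _)) V))) i = _
    rw [hat_starM_apply M h2, hat_starM_apply M h2, hat_transM_apply M h2,
      hat_truncCols, hat_truncCols, hat_truncBlock]
    exact trunc_mul_eq_pad _ _ (hat M U i) (hat M S i) (hat M V i)
  -- per-slice Eckart–Young in the transform domain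
  have hslice : ∀ i, msq (hat M A i - hat M (truncApprox M U S V k hk) i)
      ≤ msq (hat M A i - hat M B i) := by
    intro i
    rw [hA i, hAk i]
    exact matrixEY k hk (hat M U i) (hat M S i) (hat M V i) (hat M B i)
      (hU1 i) (hV1 i) (hU2 i) (hV2 i) (hSVD.fdiag i) (hSVD.nonneg i) (hSVD.descend i) (hB i)
  -- pass to spatial domain via the isometry (up to the factor κ)
  set κ := ∏ k', (c k') ^ 2 with hκ
  have hκpos : 0 < κ := Finset.prod_pos fun k' _ => by
    have := hc k'
    positivity
  have hsum : ∑ i : TI m, msq ((A - truncApprox M U S V k hk) i)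
      ≤ ∑ i : TI m, msq ((A - B) i) := by
    have e1 := sum_msq_hat M c W hW hM (A - truncApprox M U S V k hk)
    have e2 := sum_msq_hat M c W hW hM (A - B)
    have e3 : ∑ i : TI m, msq (hat M (A - truncApprox M U S V k hk) i)
        ≤ ∑ i : TI m, msq (hat M (A - B) i) := by
      refine Finset.sum_le_sum fun i _ => ?_
      rw [hat_sub, hat_sub]
      exact hslice i
    rw [e1, e2] at e3
    exact le_of_mul_le_mul_left e3 hκpos
  -- conclude for the Frobenius norms
  have hfr : ∀ D : TI m → Matrix (Fin n₁) (Fin n₂) ℝ,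
      frob D = Real.sqrt (∑ i : TI m, msq (D i)) := fun D => rfl
  rw [hfr, hfr]
  exact Real.sqrt_le_sqrt hsum


end TSVDM
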